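/- Let P and Q be Borel probability measures on the real line with means m_P, m_Q and variances σ_P², σ_Q² respectively, and suppose m_P ≠ m_Q. Set a := m_P − m_Q. Then the squared Hellinger distance satisfies H²(P,Q) ≥ 1 − √(1 − a²/(a² + (σ_P + σ_Q)²)). -/

import Mathlib

open MeasureTheory Real

/-- The squared Hellinger distance `H²(P,Q) = (1/2)∫(√p − √q)² dμ`, computed with
respect to the dominating measure `μ = P + Q` (the value is independent of the choice
of dominating measure). -/
noncomputable def hellingerSq (P Q : Measure ℝ) : ℝ :=
  (1 / 2) * ∫ x, (Real.sqrt ((P.rnDeriv (P + Q)) x).toReal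
      - Real.sqrt ((Q.rnDeriv (P + Q)) x).toReal) ^ 2 ∂(P + Q)

/-- product of two a.e.-measurable functions with integrable squares is integrable -/
lemma int_mul_of_sq {μ : Measure ℝ} {F G : ℝ → ℝ}
    (hFm : AEStronglyMeasurable F μ) (hGm : AEStronglyMeasurable G μ)
    (hF2 : Integrable (fun x => F x ^ 2) μ) (hG2 : Integrable (fun x => G x ^ 2) μ) :
    Integrable (fun x => F x * G x) μ := by
  have hbi : Integrable (fun x => (F x ^ 2 + G x ^ 2) / 2) μ := (hF2.add hG2).div_const 2
  refine hbi.mono' (hFm.mul hGm) (Filter.Eventually.of_forall fun x => ?_)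
  rw [Real.norm_eq_abs, abs_mul]
  nlinarith [sq_abs (F x), sq_abs (G x), sq_nonneg (|F x| - |G x|), abs_nonneg (F x),
    abs_nonneg (G x)]

/-- Cauchy–Schwarz for integrals. -/
lemma sq_integral_mul_le {μ : Measure ℝ} {F G : ℝ → ℝ}
    (hFm : AEStronglyMeasurable F μ) (hGm : AEStronglyMeasurable G μ)
    (hF2 : Integrable (fun x => F x ^ 2) μ) (hG2 : Integrable (fun x => G x ^ 2) μ) :
    (∫ x, F x * G x ∂μ) ^ 2 ≤ (∫ x, F x ^ 2 ∂μ) * (∫ x, G x ^ 2 ∂μ) := by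
  have hFG := int_mul_of_sq hFm hGm hF2 hG2
  have key : ∀ t : ℝ, 0 ≤ (∫ x, F x ^ 2 ∂μ) * (t * t)
      + (2 * ∫ x, F x * G x ∂μ) * t + ∫ x, G x ^ 2 ∂μ := by
    intro t
    have h0 : 0 ≤ ∫ x, (t * F x + G x) ^ 2 ∂μ := integral_nonneg fun x => sq_nonneg _
    have hexp : ∫ x, (t * F x + G x) ^ 2 ∂μ
        = (∫ x, F x ^ 2 ∂μ) * (t * t) + (2 * ∫ x, F x * G x ∂μ) * t + ∫ x, G x ^ 2 ∂μ := by
      have h1 : (fun x => (t * F x + G x) ^ 2)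
          = fun x => (t * t) * F x ^ 2 + ((2 * t) * (F x * G x) + G x ^ 2) := by
        funext x; ring
      have hI1 : Integrable (fun x => (2 * t) * (F x * G x) + G x ^ 2) μ :=
        (hFG.const_mul _).add hG2
      have hI2 : Integrable (fun x => (2 * t) * (F x * G x)) μ := hFG.const_mul _
      have hI3 : Integrable (fun x => (t * t) * F x ^ 2) μ := hF2.const_mul _
      rw [h1, integral_add hI3 hI1, integral_add hI2 hG2, integral_const_mul,
        integral_const_mul]
      ring
    linarith [hexp ▸ h0]
  have hd := discrim_le_zero key
  rw [discrim] at hd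
  nlinarith [hd]

set_option maxHeartbeats 1000000 in
/-- Analytic core of the Hellinger lower bound. -/
lemma hellinger_core (μ : Measure ℝ) (mP mQ σP σQ : ℝ) (hσP : 0 ≤ σP) (hσQ : 0 ≤ σQ)
    (u v : ℝ → ℝ) (hum : Measurable u) (hvm : Measurable v)
    (hu0 : ∀ x, 0 ≤ u x) (hv0 : ∀ x, 0 ≤ v x)
    (hiu2 : Integrable (fun x => u x ^ 2) μ) (hiv2 : Integrable (fun x => v x ^ 2) μ)
    (hu2v : ∫ x, u x ^ 2 ∂μ = 1) (hv2v : ∫ x, v x ^ 2 ∂μ = 1)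
    (hixu : Integrable (fun x => (x - mP) * u x ^ 2) μ)
    (hixu0 : ∫ x, (x - mP) * u x ^ 2 ∂μ = 0)
    (hix2u : Integrable (fun x => (x - mP) ^ 2 * u x ^ 2) μ)
    (hix2uv : ∫ x, (x - mP) ^ 2 * u x ^ 2 ∂μ = σP ^ 2)
    (hixv : Integrable (fun x => (x - mQ) * v x ^ 2) μ)
    (hixv0 : ∫ x, (x - mQ) * v x ^ 2 ∂μ = 0)
    (hix2v : Integrable (fun x => (x - mQ) ^ 2 * v x ^ 2) μ)
    (hix2vv : ∫ x, (x - mQ) ^ 2 * v x ^ 2 ∂μ = σQ ^ 2)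
    (hne : mP ≠ mQ) :
    (1 / 2 : ℝ) * ∫ x, (u x - v x) ^ 2 ∂μ ≥
      1 - Real.sqrt (1 - (mP - mQ) ^ 2 / ((mP - mQ) ^ 2 + (σP + σQ) ^ 2)) := by
  obtain ⟨ρ, hρdef⟩ : ∃ r : ℝ, r = ∫ x, u x * v x ∂μ := ⟨_, rfl⟩
  have hiuv : Integrable (fun x => u x * v x) μ :=
    int_mul_of_sq hum.aestronglyMeasurable hvm.aestronglyMeasurable hiu2 hiv2
  have hρ0 : 0 ≤ ρ := hρdef ▸ integral_nonneg fun x => mul_nonneg (hu0 x) (hv0 x)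
  have hρ1 : ρ ≤ 1 := by
    have hb : ∀ x, u x * v x ≤ (u x ^ 2 + v x ^ 2) / 2 := fun x => by
      nlinarith [sq_nonneg (u x - v x)]
    have hbi : Integrable (fun x => (u x ^ 2 + v x ^ 2) / 2) μ := (hiu2.add hiv2).div_const 2
    have h := integral_mono hiuv hbi hb
    have hadd : Integrable (fun x => u x ^ 2 + v x ^ 2) μ := hiu2.add hiv2
    rw [integral_div, integral_add hiu2 hiv2, hu2v, hv2v, ← hρdef] at h
    linarith
  have h1ρ : 0 ≤ 1 - ρ ^ 2 := by nlinarith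
  -- the centered functions
  obtain ⟨F1, hF1def⟩ : ∃ F : ℝ → ℝ, F = fun x => (x - mP) * u x := ⟨_, rfl⟩
  obtain ⟨G1, hG1def⟩ : ∃ F : ℝ → ℝ, F = fun x => (x - mQ) * v x := ⟨_, rfl⟩
  obtain ⟨w, hwdef⟩ : ∃ F : ℝ → ℝ, F = fun x => v x - ρ * u x := ⟨_, rfl⟩
  obtain ⟨w', hw'def⟩ : ∃ F : ℝ → ℝ, F = fun x => u x - ρ * v x := ⟨_, rfl⟩
  have hF1m : Measurable F1 := hF1def ▸ (measurable_id.sub measurable_const).mul hum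
  have hG1m : Measurable G1 := hG1def ▸ (measurable_id.sub measurable_const).mul hvm
  have hwm : Measurable w := hwdef ▸ hvm.sub (hum.const_mul ρ)
  have hw'm : Measurable w' := hw'def ▸ hum.sub (hvm.const_mul ρ)
  have hiF1sq : Integrable (fun x => F1 x ^ 2) μ :=
    hix2u.congr (Filter.Eventually.of_forall fun x => by simp only [hF1def]; ring)
  have hiG1sq : Integrable (fun x => G1 x ^ 2) μ :=
    hix2v.congr (Filter.Eventually.of_forall fun x => by simp only [hG1def]; ring)
  have hintF1sq : ∫ x, F1 x ^ 2 ∂μ = σP ^ 2 := by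
    rw [← hix2uv]
    exact integral_congr_ae (Filter.Eventually.of_forall fun x => by simp only [hF1def]; ring)
  have hintG1sq : ∫ x, G1 x ^ 2 ∂μ = σQ ^ 2 := by
    rw [← hix2vv]
    exact integral_congr_ae (Filter.Eventually.of_forall fun x => by simp only [hG1def]; ring)
  have hiwsq : Integrable (fun x => w x ^ 2) μ := by
    have hsrc : Integrable (fun x => v x ^ 2 - (2 * ρ) * (u x * v x) + ρ ^ 2 * u x ^ 2) μ :=
      (hiv2.sub (hiuv.const_mul _)).add (hiu2.const_mul _)
    exact hsrc.congr (Filter.Eventually.of_forall fun x => by simp only [hwdef]; ring)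
  have hiw'sq : Integrable (fun x => w' x ^ 2) μ := by
    have hsrc : Integrable (fun x => u x ^ 2 - (2 * ρ) * (u x * v x) + ρ ^ 2 * v x ^ 2) μ :=
      (hiu2.sub (hiuv.const_mul _)).add (hiv2.const_mul _)
    exact hsrc.congr (Filter.Eventually.of_forall fun x => by simp only [hw'def]; ring)
  have hintwsq : ∫ x, w x ^ 2 ∂μ = 1 - ρ ^ 2 := by
    have h1 : ∫ x, w x ^ 2 ∂μ
        = ∫ x, (v x ^ 2 - (2 * ρ) * (u x * v x) + ρ ^ 2 * u x ^ 2) ∂μ :=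
      integral_congr_ae (Filter.Eventually.of_forall fun x => by simp only [hwdef]; ring)
    have hA : Integrable (fun x => v x ^ 2 - (2 * ρ) * (u x * v x)) μ :=
      hiv2.sub (hiuv.const_mul _)
    have hB : Integrable (fun x => ρ ^ 2 * u x ^ 2) μ := hiu2.const_mul _
    have hC : Integrable (fun x => (2 * ρ) * (u x * v x)) μ := hiuv.const_mul _
    rw [h1, integral_add hA hB, integral_sub hiv2 hC, integral_const_mul, integral_const_mul,
      hv2v, hu2v, ← hρdef]
    ring
  have hintw'sq : ∫ x, w' x ^ 2 ∂μ = 1 - ρ ^ 2 := by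
    have h1 : ∫ x, w' x ^ 2 ∂μ
        = ∫ x, (u x ^ 2 - (2 * ρ) * (u x * v x) + ρ ^ 2 * v x ^ 2) ∂μ :=
      integral_congr_ae (Filter.Eventually.of_forall fun x => by simp only [hw'def]; ring)
    have hA : Integrable (fun x => u x ^ 2 - (2 * ρ) * (u x * v x)) μ :=
      hiu2.sub (hiuv.const_mul _)
    have hB : Integrable (fun x => ρ ^ 2 * v x ^ 2) μ := hiv2.const_mul _
    have hC : Integrable (fun x => (2 * ρ) * (u x * v x)) μ := hiuv.const_mul _
    rw [h1, integral_add hA hB, integral_sub hiu2 hC, integral_const_mul, integral_const_mul,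
      hv2v, hu2v, ← hρdef]
    ring
  -- the two cross terms
  have hiF1v : Integrable (fun x => F1 x * v x) μ :=
    int_mul_of_sq hF1m.aestronglyMeasurable hvm.aestronglyMeasurable hiF1sq hiv2
  have hiG1u : Integrable (fun x => G1 x * u x) μ :=
    int_mul_of_sq hG1m.aestronglyMeasurable hum.aestronglyMeasurable hiG1sq hiu2
  obtain ⟨IP, hIPdef⟩ : ∃ r : ℝ, r = ∫ x, F1 x * v x ∂μ := ⟨_, rfl⟩
  obtain ⟨IQ, hIQdef⟩ : ∃ r : ℝ, r = ∫ x, G1 x * u x ∂μ := ⟨_, rfl⟩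
  have hIP : IP = ∫ x, F1 x * w x ∂μ := by
    have h1 : ∫ x, F1 x * w x ∂μ
        = ∫ x, (F1 x * v x - ρ * ((x - mP) * u x ^ 2)) ∂μ :=
      integral_congr_ae (Filter.Eventually.of_forall fun x => by
        simp only [hwdef, hF1def]; ring)
    have hC : Integrable (fun x => ρ * ((x - mP) * u x ^ 2)) μ := hixu.const_mul _
    rw [h1, integral_sub hiF1v hC, integral_const_mul, hixu0, ← hIPdef]
    ring
  have hIQ : IQ = ∫ x, G1 x * w' x ∂μ := by
    have h1 : ∫ x, G1 x * w' x ∂μ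
        = ∫ x, (G1 x * u x - ρ * ((x - mQ) * v x ^ 2)) ∂μ :=
      integral_congr_ae (Filter.Eventually.of_forall fun x => by
        simp only [hw'def, hG1def]; ring)
    have hC : Integrable (fun x => ρ * ((x - mQ) * v x ^ 2)) μ := hixv.const_mul _
    rw [h1, integral_sub hiG1u hC, integral_const_mul, hixv0, ← hIQdef]
    ring
  have hIPsq : IP ^ 2 ≤ σP ^ 2 * (1 - ρ ^ 2) := by
    rw [hIP]
    have h := sq_integral_mul_le hF1m.aestronglyMeasurable hwm.aestronglyMeasurable
      hiF1sq hiwsq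
    rwa [hintF1sq, hintwsq] at h
  have hIQsq : IQ ^ 2 ≤ σQ ^ 2 * (1 - ρ ^ 2) := by
    rw [hIQ]
    have h := sq_integral_mul_le hG1m.aestronglyMeasurable hw'm.aestronglyMeasurable
      hiG1sq hiw'sq
    rwa [hintG1sq, hintw'sq] at h
  have habsIP : |IP| ≤ σP * Real.sqrt (1 - ρ ^ 2) := by
    rw [← Real.sqrt_sq_eq_abs]
    calc Real.sqrt (IP ^ 2) ≤ Real.sqrt (σP ^ 2 * (1 - ρ ^ 2)) := Real.sqrt_le_sqrt hIPsq
      _ = σP * Real.sqrt (1 - ρ ^ 2) := by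
          rw [Real.sqrt_mul (sq_nonneg _), Real.sqrt_sq hσP]
  have habsIQ : |IQ| ≤ σQ * Real.sqrt (1 - ρ ^ 2) := by
    rw [← Real.sqrt_sq_eq_abs]
    calc Real.sqrt (IQ ^ 2) ≤ Real.sqrt (σQ ^ 2 * (1 - ρ ^ 2)) := Real.sqrt_le_sqrt hIQsq
      _ = σQ * Real.sqrt (1 - ρ ^ 2) := by
          rw [Real.sqrt_mul (sq_nonneg _), Real.sqrt_sq hσQ]
  -- difference identity
  have hdiff : IQ - IP = (mP - mQ) * ρ := by
    have h1 : ∫ x, (G1 x * u x - F1 x * v x) ∂μ = ∫ x, (mP - mQ) * (u x * v x) ∂μ :=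
      integral_congr_ae (Filter.Eventually.of_forall fun x => by
        simp only [hF1def, hG1def]; ring)
    rw [integral_sub hiG1u hiF1v, integral_const_mul, ← hρdef, ← hIQdef, ← hIPdef] at h1
    exact h1
  have key : |mP - mQ| * ρ ≤ (σP + σQ) * Real.sqrt (1 - ρ ^ 2) := by
    have h1 : |mP - mQ| * ρ = |IQ - IP| := by
      rw [hdiff, abs_mul, abs_of_nonneg hρ0]
    have h2 : |IQ - IP| ≤ |IQ| + |IP| := abs_sub _ _
    nlinarith [habsIP, habsIQ]
  -- final algebra
  obtain ⟨a, hadef⟩ : ∃ r : ℝ, r = mP - mQ := ⟨_, rfl⟩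
  obtain ⟨s, hsdef⟩ : ∃ r : ℝ, r = σP + σQ := ⟨_, rfl⟩
  have ha : a ≠ 0 := hadef ▸ sub_ne_zero.mpr hne
  have hs0 : 0 ≤ s := hsdef ▸ add_nonneg hσP hσQ
  have hden : 0 < a ^ 2 + s ^ 2 := by positivity
  rw [← hadef, ← hsdef] at key
  have hρle : ρ ≤ Real.sqrt (1 - a ^ 2 / (a ^ 2 + s ^ 2)) := by
    have h1 : 1 - a ^ 2 / (a ^ 2 + s ^ 2) = s ^ 2 / (a ^ 2 + s ^ 2) := by
      field_simp
      ring
    rw [h1]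
    refine Real.le_sqrt_of_sq_le ?_
    have hsq : (|a| * ρ) * (|a| * ρ) ≤ (s * Real.sqrt (1 - ρ ^ 2)) * (s * Real.sqrt (1 - ρ ^ 2)) :=
      mul_self_le_mul_self (mul_nonneg (abs_nonneg _) hρ0) key
    have hms : Real.sqrt (1 - ρ ^ 2) * Real.sqrt (1 - ρ ^ 2) = 1 - ρ ^ 2 :=
      Real.mul_self_sqrt h1ρ
    have hineq : a ^ 2 * ρ ^ 2 ≤ s ^ 2 * (1 - ρ ^ 2) := by
      nlinarith [hsq, hms, sq_abs a]
    rw [le_div_iff₀ hden]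
    nlinarith [hineq]
  -- Hellinger expansion
  have hH : (1 / 2 : ℝ) * ∫ x, (u x - v x) ^ 2 ∂μ = 1 - ρ := by
    have h1 : ∫ x, (u x - v x) ^ 2 ∂μ
        = ∫ x, (u x ^ 2 + v x ^ 2 - 2 * (u x * v x)) ∂μ :=
      integral_congr_ae (Filter.Eventually.of_forall fun x => by ring)
    have hA : Integrable (fun x => u x ^ 2 + v x ^ 2) μ := hiu2.add hiv2
    have hC : Integrable (fun x => 2 * (u x * v x)) μ := hiuv.const_mul 2
    rw [h1, integral_sub hA hC, integral_add hiu2 hiv2,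
      integral_const_mul, hu2v, hv2v, ← hρdef]
    ring
  rw [ge_iff_le, hH]
  rw [← hadef, ← hsdef]
  linarith [hρle]

set_option maxHeartbeats 1000000 in
theorem hellinger_lower_bound
    (P Q : Measure ℝ) [IsProbabilityMeasure P] [IsProbabilityMeasure Q]
    (mP mQ σP σQ : ℝ) (hσP : 0 ≤ σP) (hσQ : 0 ≤ σQ)
    (hP1 : Integrable (fun x => x) P) (hP2 : Integrable (fun x => x ^ 2) P)
    (hQ1 : Integrable (fun x => x) Q) (hQ2 : Integrable (fun x => x ^ 2) Q)
    (hmP : ∫ x, x ∂P = mP) (hmQ : ∫ x, x ∂Q = mQ)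
    (hvP : ∫ x, (x - mP) ^ 2 ∂P = σP ^ 2) (hvQ : ∫ x, (x - mQ) ^ 2 ∂Q = σQ ^ 2)
    (hne : mP ≠ mQ) :
    hellingerSq P Q ≥
      1 - Real.sqrt (1 - (mP - mQ) ^ 2 / ((mP - mQ) ^ 2 + (σP + σQ) ^ 2)) := by
  have hPμ : P ≪ P + Q := Measure.absolutelyContinuous_of_le (Measure.le_add_right le_rfl)
  have hQμ : Q ≪ P + Q := Measure.absolutelyContinuous_of_le (Measure.le_add_left le_rfl)
  set u : ℝ → ℝ := fun x => Real.sqrt ((P.rnDeriv (P + Q)) x).toReal with hudef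
  set v : ℝ → ℝ := fun x => Real.sqrt ((Q.rnDeriv (P + Q)) x).toReal with hvdef
  have husq : ∀ x, u x ^ 2 = ((P.rnDeriv (P + Q)) x).toReal := fun x =>
    Real.sq_sqrt ENNReal.toReal_nonneg
  have hvsq : ∀ x, v x ^ 2 = ((Q.rnDeriv (P + Q)) x).toReal := fun x =>
    Real.sq_sqrt ENNReal.toReal_nonneg
  have hum : Measurable u := (Measure.measurable_rnDeriv P (P + Q)).ennreal_toReal.sqrt
  have hvm : Measurable v := (Measure.measurable_rnDeriv Q (P + Q)).ennreal_toReal.sqrt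
  -- transfer lemmas
  have transP : ∀ h : ℝ → ℝ, ∫ x, h x * u x ^ 2 ∂(P + Q) = ∫ x, h x ∂P := by
    intro h
    calc ∫ x, h x * u x ^ 2 ∂(P + Q)
        = ∫ x, ((P.rnDeriv (P + Q)) x).toReal • h x ∂(P + Q) :=
          integral_congr_ae (Filter.Eventually.of_forall fun x => by
            show h x * u x ^ 2 = ((P.rnDeriv (P + Q)) x).toReal • h x
            rw [husq x, smul_eq_mul, mul_comm])
      _ = ∫ x, h x ∂P := integral_rnDeriv_smul hPμ
  have transQ : ∀ h : ℝ → ℝ, ∫ x, h x * v x ^ 2 ∂(P + Q) = ∫ x, h x ∂Q := by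
    intro h
    calc ∫ x, h x * v x ^ 2 ∂(P + Q)
        = ∫ x, ((Q.rnDeriv (P + Q)) x).toReal • h x ∂(P + Q) :=
          integral_congr_ae (Filter.Eventually.of_forall fun x => by
            show h x * v x ^ 2 = ((Q.rnDeriv (P + Q)) x).toReal • h x
            rw [hvsq x, smul_eq_mul, mul_comm])
      _ = ∫ x, h x ∂Q := integral_rnDeriv_smul hQμ
  have transPInt : ∀ {h : ℝ → ℝ}, Integrable h P →
      Integrable (fun x => h x * u x ^ 2) (P + Q) := by
    intro h hh
    refine ((integrable_rnDeriv_smul_iff hPμ).mpr hh).congr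
      (Filter.Eventually.of_forall fun x => ?_)
    show ((P.rnDeriv (P + Q)) x).toReal • h x = h x * u x ^ 2
    rw [husq x, smul_eq_mul, mul_comm]
  have transQInt : ∀ {h : ℝ → ℝ}, Integrable h Q →
      Integrable (fun x => h x * v x ^ 2) (P + Q) := by
    intro h hh
    refine ((integrable_rnDeriv_smul_iff hQμ).mpr hh).congr
      (Filter.Eventually.of_forall fun x => ?_)
    show ((Q.rnDeriv (P + Q)) x).toReal • h x = h x * v x ^ 2
    rw [hvsq x, smul_eq_mul, mul_comm]
  -- integrability of moment functions
  have hP1' : Integrable (fun x : ℝ => x - mP) P := hP1.sub (integrable_const mP)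
  have hQ1' : Integrable (fun x : ℝ => x - mQ) Q := hQ1.sub (integrable_const mQ)
  have hP2' : Integrable (fun x : ℝ => (x - mP) ^ 2) P := by
    have h : (fun x : ℝ => (x - mP) ^ 2) = fun x => x ^ 2 - (2 * mP) * x + mP ^ 2 := by
      funext x; ring
    rw [h]
    exact (hP2.sub (hP1.const_mul _)).add (integrable_const _)
  have hQ2' : Integrable (fun x : ℝ => (x - mQ) ^ 2) Q := by
    have h : (fun x : ℝ => (x - mQ) ^ 2) = fun x => x ^ 2 - (2 * mQ) * x + mQ ^ 2 := by
      funext x; ring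
    rw [h]
    exact (hQ2.sub (hQ1.const_mul _)).add (integrable_const _)
  have hmP0 : ∫ x, (x - mP) ∂P = 0 := by
    rw [integral_sub hP1 (integrable_const _), hmP, integral_const]
    simp
  have hmQ0 : ∫ x, (x - mQ) ∂Q = 0 := by
    rw [integral_sub hQ1 (integrable_const _), hmQ, integral_const]
    simp
  -- u², v² integrability / normalization
  have hiu2 : Integrable (fun x => u x ^ 2) (P + Q) :=
    Measure.integrable_toReal_rnDeriv.congr (Filter.Eventually.of_forall fun x => (husq x).symm)
  have hiv2 : Integrable (fun x => v x ^ 2) (P + Q) :=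
    Measure.integrable_toReal_rnDeriv.congr (Filter.Eventually.of_forall fun x => (hvsq x).symm)
  have hu2v : ∫ x, u x ^ 2 ∂(P + Q) = 1 := by
    have h1 : ∫ x, u x ^ 2 ∂(P + Q) = ∫ x, ((P.rnDeriv (P + Q)) x).toReal ∂(P + Q) :=
      integral_congr_ae (Filter.Eventually.of_forall husq)
    rw [h1, Measure.integral_toReal_rnDeriv hPμ]
    simp
  have hv2v : ∫ x, v x ^ 2 ∂(P + Q) = 1 := by
    have h1 : ∫ x, v x ^ 2 ∂(P + Q) = ∫ x, ((Q.rnDeriv (P + Q)) x).toReal ∂(P + Q) :=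
      integral_congr_ae (Filter.Eventually.of_forall hvsq)
    rw [h1, Measure.integral_toReal_rnDeriv hQμ]
    simp
  have key := hellinger_core (P + Q) mP mQ σP σQ hσP hσQ u v hum hvm
    (fun x => Real.sqrt_nonneg _) (fun x => Real.sqrt_nonneg _)
    hiu2 hiv2 hu2v hv2v
    (transPInt hP1') ((transP _).trans hmP0)
    (transPInt hP2') ((transP _).trans hvP)
    (transQInt hQ1') ((transQ _).trans hmQ0)
    (transQInt hQ2') ((transQ _).trans hvQ)
    hne
  unfold hellingerSq
  simp only [hudef, hvdef] at key
  exact key
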